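/- arXiv:1107.5194 — 9 statements merged into one kernel-verified Lean document; each statement's English description precedes it below -/
import Mathlib

section
/- Let δ > 0, let M be an m×n real matrix with all entries nonnegative, and let W be an m×r matrix and H an r×n matrix all of whose entries are at least δ (with m, n, r ≥ 1). Define the updated matrix W' entrywise by W'_{ip} = max(δ, W_{ip} · (M Hᵀ)_{ip} / (W H Hᵀ)_{ip}). Then the Frobenius norm of the residual does not increase: ‖M − W' H‖_F ≤ ‖M − W H‖_F. -/
open Matrix

lemma quad_coord (a B C δ : ℝ) (hδ : 0 < δ) (ha : δ ≤ a) (hC : 0 < C) :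
    (max δ (a * B / C) - a)^2 * C / a ≤ 2 * (max δ (a * B / C) - a) * (B - C) := by
  have ha0 : 0 < a := lt_of_lt_of_le hδ ha
  rw [div_le_iff₀ ha0]
  rcases le_or_gt (a * B / C) δ with h | h
  · rw [max_eq_left h]
    have hBC : a * B ≤ δ * C := by
      rw [div_le_iff₀ hC] at h; linarith
    nlinarith [sq_nonneg (δ - a), mul_pos hδ hC]
  · rw [max_eq_right h.le]
    have key : (a * B / C - a) * C = a * (B - C) := by
      field_simp
    nlinarith [sq_nonneg (a*B/C - a), mul_pos ha0 hC, sq_nonneg (B - C),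
      mul_nonneg (mul_nonneg ha0.le (sq_nonneg (B-C))) hC.le]

lemma sym_sum_nonneg {ι : Type*} [Fintype ι] (F : ι → ι → ℝ)
    (h : ∀ p q, 0 ≤ F p q + F q p) : 0 ≤ ∑ p, ∑ q, F p q := by
  have h2 : (0:ℝ) ≤ ∑ p, ∑ q, (F p q + F q p) := by
    apply Finset.sum_nonneg; intro p _; apply Finset.sum_nonneg; intro q _; exact h p q
  have heq : ∑ p, ∑ q, (F p q + F q p) = (∑ p, ∑ q, F p q) + ∑ p, ∑ q, F q p := by
    simp [Finset.sum_add_distrib]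
  have hsw : ∑ (p:ι), ∑ (q:ι), F q p = ∑ p, ∑ q, F p q := Finset.sum_comm
  linarith

lemma majorize {ι : Type*} [Fintype ι] (G : ι → ι → ℝ) (a d : ι → ℝ)
    (hGs : ∀ p q, G p q = G q p) (hG : ∀ p q, 0 ≤ G p q) (ha : ∀ p, 0 < a p) :
    ∑ p, ∑ q, G p q * d p * d q ≤ ∑ p, (d p)^2 * (∑ q, G p q * a q) / a p := by
  have hR : ∑ p, (d p)^2 * (∑ q, G p q * a q) / a p
      = ∑ p, ∑ q, (d p)^2 * (G p q * a q) / a p := by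
    apply Finset.sum_congr rfl; intro p _
    rw [Finset.mul_sum, Finset.sum_div]
  rw [hR, ← sub_nonneg, ← Finset.sum_sub_distrib]
  simp_rw [← Finset.sum_sub_distrib]
  apply sym_sum_nonneg
  intro p q
  have h1 := ha p; have h2 := ha q
  have key : 0 ≤ G p q * ((d p)^2 * a q / a p + (d q)^2 * a p / a q - 2 * d p * d q) := by
    apply mul_nonneg (hG p q)
    have hpq : 0 < a p * a q := mul_pos h1 h2
    calc (0:ℝ) ≤ (d p * a q - d q * a p)^2 / (a p * a q) :=
          div_nonneg (sq_nonneg _) hpq.le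
      _ = (d p)^2 * a q / a p + (d q)^2 * a p / a q - 2 * d p * d q := by
          field_simp; ring
  rw [hGs q p]
  calc (0:ℝ) ≤ G p q * ((d p)^2 * a q / a p + (d q)^2 * a p / a q - 2 * d p * d q) := key
    _ = ((d p)^2 * (G p q * a q) / a p - G p q * d p * d q)
        + ((d q)^2 * (G p q * a p) / a q - G p q * d q * d p) := by ring

lemma sum_prod_expand {n r : ℕ} (f g : Fin r → ℝ) (x : Fin r → Fin n → ℝ) :
    ∑ j, (∑ p, f p * x p j) * (∑ q, g q * x q j)
      = ∑ p, ∑ q, (f p * g q) * ∑ j, x p j * x q j := by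
  simp only [Finset.sum_mul_sum]
  rw [Finset.sum_comm]
  refine Finset.sum_congr rfl fun p _ => ?_
  rw [Finset.sum_comm]
  refine Finset.sum_congr rfl fun q _ => ?_
  rw [Finset.mul_sum]
  refine Finset.sum_congr rfl fun j _ => ?_
  ring

lemma row_step {n r : ℕ} (hn : 0 < n) (δ : ℝ) (hδ : 0 < δ)
    (Mr : Fin n → ℝ) (hM : ∀ j, 0 ≤ Mr j)
    (a : Fin r → ℝ) (ha : ∀ p, δ ≤ a p)
    (H : Fin r → Fin n → ℝ) (hH : ∀ p j, δ ≤ H p j)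
    (b : Fin r → ℝ)
    (hb : ∀ p, b p = max δ (a p * (∑ j, Mr j * H p j)
        / (∑ j, (∑ q, a q * H q j) * H p j))) :
    ∑ j, (Mr j - ∑ p, b p * H p j)^2 ≤ ∑ j, (Mr j - ∑ p, a p * H p j)^2 := by
  set e : Fin n → ℝ := fun j => Mr j - ∑ p, a p * H p j with he
  set d : Fin r → ℝ := fun p => b p - a p with hd
  set G : Fin r → Fin r → ℝ := fun p q => ∑ j, H p j * H q j with hG
  set B : Fin r → ℝ := fun p => ∑ j, Mr j * H p j with hB
  set C : Fin r → ℝ := fun p => ∑ j, (∑ q, a q * H q j) * H p j with hC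
  have ha0 : ∀ p, 0 < a p := fun p => lt_of_lt_of_le hδ (ha p)
  have hH0 : ∀ p j, 0 < H p j := fun p j => lt_of_lt_of_le hδ (hH p j)
  have hCG : ∀ p, C p = ∑ q, G p q * a q := by
    intro p
    simp only [hC, hG, Finset.sum_mul]
    rw [Finset.sum_comm]
    exact Finset.sum_congr rfl fun q _ => Finset.sum_congr rfl fun j _ => by ring
  have hCpos : ∀ p, 0 < C p := by
    intro p
    haveI : Nonempty (Fin r) := ⟨p⟩
    haveI : Nonempty (Fin n) := ⟨⟨0, hn⟩⟩
    apply Finset.sum_pos _ Finset.univ_nonempty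
    intro j _
    exact mul_pos (Finset.sum_pos (fun q _ => mul_pos (ha0 q) (hH0 q j)) Finset.univ_nonempty)
      (hH0 p j)
  -- residual rewrite
  have hres : ∀ j, Mr j - ∑ p, b p * H p j = e j - ∑ p, d p * H p j := by
    intro j
    simp only [he, hd, sub_mul, Finset.sum_sub_distrib]
    ring
  have hes : ∑ j, e j * (∑ p, d p * H p j) = ∑ p, d p * (B p - C p) := by
    simp only [Finset.mul_sum]
    rw [Finset.sum_comm]
    refine Finset.sum_congr rfl fun p _ => ?_
    simp only [hB, hC, ← Finset.sum_sub_distrib, Finset.mul_sum]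
    refine Finset.sum_congr rfl fun j _ => ?_
    simp only [he]; ring
  have hss : ∑ j, (∑ p, d p * H p j) * (∑ q, d q * H q j) = ∑ p, ∑ q, G p q * d p * d q := by
    rw [sum_prod_expand]
    exact Finset.sum_congr rfl fun p _ => Finset.sum_congr rfl fun q _ => by
      simp only [hG]; ring
  -- key inequality : ∑ s² ≤ 2 ∑ e s
  have hmaj : ∑ p, ∑ q, G p q * d p * d q ≤ ∑ p, (d p)^2 * C p / a p := by
    have := majorize G a d (fun p q => by simp only [hG]; exact Finset.sum_congr rfl fun j _ => mul_comm _ _)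
      (fun p q => Finset.sum_nonneg fun j _ => mul_nonneg (hH0 p j).le (hH0 q j).le) ha0
    calc ∑ p, ∑ q, G p q * d p * d q ≤ ∑ p, (d p)^2 * (∑ q, G p q * a q) / a p := this
      _ = ∑ p, (d p)^2 * C p / a p := by
          exact Finset.sum_congr rfl fun p _ => by rw [hCG p]
  have hquad : ∑ p, (d p)^2 * C p / a p ≤ ∑ p, 2 * d p * (B p - C p) := by
    apply Finset.sum_le_sum
    intro p _
    have hdp : d p = max δ (a p * B p / C p) - a p := by
      simp only [hd, hb p, hB, hC]
    rw [hdp]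
    exact quad_coord (a p) (B p) (C p) δ hδ (ha p) (hCpos p)
  have hkey : ∑ j, (∑ p, d p * H p j)^2 ≤ 2 * ∑ j, e j * (∑ p, d p * H p j) := by
    calc ∑ j, (∑ p, d p * H p j)^2
        = ∑ j, (∑ p, d p * H p j) * (∑ q, d q * H q j) := by
          exact Finset.sum_congr rfl fun j _ => sq (∑ p, d p * H p j) ▸ by ring
      _ = ∑ p, ∑ q, G p q * d p * d q := hss
      _ ≤ ∑ p, (d p)^2 * C p / a p := hmaj
      _ ≤ ∑ p, 2 * d p * (B p - C p) := hquad
      _ = 2 * ∑ p, d p * (B p - C p) := by rw [Finset.mul_sum]; exact Finset.sum_congr rfl fun p _ => by ring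
      _ = 2 * ∑ j, e j * (∑ p, d p * H p j) := by rw [hes]
  calc ∑ j, (Mr j - ∑ p, b p * H p j)^2
      = ∑ j, (e j - ∑ p, d p * H p j)^2 := Finset.sum_congr rfl fun j _ => by rw [hres j]
    _ = ∑ j, (e j)^2 - 2 * ∑ j, e j * (∑ p, d p * H p j) + ∑ j, (∑ p, d p * H p j)^2 := by
        rw [Finset.mul_sum, ← Finset.sum_sub_distrib, ← Finset.sum_add_distrib]
        exact Finset.sum_congr rfl fun j _ => by ring
    _ ≤ ∑ j, (e j)^2 := by linarith

/-- The Frobenius norm of a real matrix: `‖A‖_F = (Σ_{i,j} A_{ij}²)^{1/2}`. -/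
noncomputable def frobNorm {m n : ℕ} (A : Matrix (Fin m) (Fin n) ℝ) : ℝ :=
  Real.sqrt (∑ i, ∑ j, (A i j) ^ 2)

/-- The δ-truncated multiplicative update of `W` does not increase the
Frobenius norm of the residual `M - W H`. -/
theorem mu_delta_update_W_nonincreasing {m n r : ℕ}
    (hm : 1 ≤ m) (hn : 1 ≤ n) (hr : 1 ≤ r)
    (δ : ℝ) (hδ : 0 < δ)
    (M : Matrix (Fin m) (Fin n) ℝ) (hM : ∀ i j, 0 ≤ M i j)
    (W : Matrix (Fin m) (Fin r) ℝ) (hW : ∀ i p, δ ≤ W i p)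
    (H : Matrix (Fin r) (Fin n) ℝ) (hH : ∀ p j, δ ≤ H p j)
    (W' : Matrix (Fin m) (Fin r) ℝ)
    (hW' : ∀ i p, W' i p = max δ (W i p * (M * Hᵀ) i p / (W * H * Hᵀ) i p)) :
    frobNorm (M - W' * H) ≤ frobNorm (M - W * H) := by
  unfold frobNorm
  apply Real.sqrt_le_sqrt
  apply Finset.sum_le_sum
  intro i _
  have hb : ∀ p, W' i p = max δ (W i p * (∑ j, M i j * H p j)
      / (∑ j, (∑ q, W i q * H q j) * H p j)) := by
    intro p
    have := hW' i p
    simp only [Matrix.mul_apply, Matrix.transpose_apply] at this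
    exact this
  have key := row_step (lt_of_lt_of_le Nat.zero_lt_one hn) δ hδ (M i)
    (fun j => hM i j) (W i) (fun p => hW i p) (fun p j => H p j)
    (fun p j => hH p j) (W' i) hb
  simp only [Matrix.sub_apply, Matrix.mul_apply]
  exact key
end

section
/- Let δ > 0, let M be an m×n real matrix with all entries nonnegative, and let W be an m×r matrix and H an r×n matrix all of whose entries are at least δ (with m, n, r ≥ 1). Define the updated matrix H' entrywise by H'_{pj} = max(δ, H_{pj} · (Wᵀ M)_{pj} / (Wᵀ W H)_{pj}). Then ‖M − W H'‖_F ≤ ‖M − W H‖_F. -/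
open Matrix Finset

namespace MUaux

variable {m r : ℕ}

/-- Entry of the Gram matrix `WᵀW`. -/
def Amat (W : Fin m → Fin r → ℝ) (p q : Fin r) : ℝ := ∑ i, W i p * W i q

/-- Entry of `Wᵀ v`. -/
def cvec (W : Fin m → Fin r → ℝ) (v : Fin m → ℝ) (p : Fin r) : ℝ := ∑ i, W i p * v i

/-- Entry of `(WᵀW) h`. -/
def Ahvec (W : Fin m → Fin r → ℝ) (h : Fin r → ℝ) (p : Fin r) : ℝ := ∑ q, Amat W p q * h q

lemma Amat_symm (W : Fin m → Fin r → ℝ) (p q : Fin r) : Amat W p q = Amat W q p := by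
  unfold Amat; exact Finset.sum_congr rfl fun i _ => mul_comm _ _

lemma Amat_pos (hm : 1 ≤ m) {δ : ℝ} (hδ : 0 < δ) (W : Fin m → Fin r → ℝ)
    (hW : ∀ i p, δ ≤ W i p) (p q : Fin r) : 0 < Amat W p q := by
  have : Nonempty (Fin m) := ⟨⟨0, hm⟩⟩
  exact Finset.sum_pos (fun i _ => mul_pos (hδ.trans_le (hW i p)) (hδ.trans_le (hW i q)))
    Finset.univ_nonempty

lemma Ahvec_pos (hm : 1 ≤ m) {δ : ℝ} (hδ : 0 < δ) (W : Fin m → Fin r → ℝ)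
    (hW : ∀ i p, δ ≤ W i p) (h : Fin r → ℝ) (hh : ∀ p, δ ≤ h p) (p : Fin r) :
    0 < Ahvec W h p := by
  have : Nonempty (Fin r) := ⟨p⟩
  exact Finset.sum_pos
    (fun q _ => mul_pos (Amat_pos hm hδ W hW p q) (hδ.trans_le (hh q)))
    Finset.univ_nonempty

/-- Cross term: `Σ_i W_{ip} (v_i - (Wh)_i) = (Wᵀv)_p - (WᵀWh)_p`. -/
lemma cross (W : Fin m → Fin r → ℝ) (v : Fin m → ℝ) (h : Fin r → ℝ) (p : Fin r) :
    ∑ i, W i p * (v i - ∑ q, W i q * h q) = cvec W v p - Ahvec W h p := by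
  have e1 : ∑ i, W i p * (v i - ∑ q, W i q * h q)
      = ∑ i, W i p * v i - ∑ i, ∑ q, W i p * (W i q * h q) := by
    rw [← Finset.sum_sub_distrib]
    refine Finset.sum_congr rfl fun i _ => ?_
    rw [mul_sub, Finset.mul_sum]
  rw [e1, Finset.sum_comm]
  unfold cvec Ahvec Amat
  congr 1
  refine Finset.sum_congr rfl fun q _ => ?_
  rw [Finset.sum_mul]
  exact Finset.sum_congr rfl fun i _ => by ring

/-- Expansion of the quadratic form `‖Wd‖² = dᵀ(WᵀW)d`. -/
lemma Qexp (W : Fin m → Fin r → ℝ) (d : Fin r → ℝ) :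
    ∑ i, (∑ p, W i p * d p) ^ 2 = ∑ p, ∑ q, Amat W p q * (d p * d q) := by
  have e1 : ∀ i, (∑ p, W i p * d p) ^ 2
      = ∑ p, ∑ q, (W i p * d p) * (W i q * d q) := by
    intro i; rw [sq, Finset.sum_mul_sum]
  rw [Finset.sum_congr rfl fun i _ => e1 i, Finset.sum_comm]
  refine Finset.sum_congr rfl fun p _ => ?_
  rw [Finset.sum_comm]
  refine Finset.sum_congr rfl fun q _ => ?_
  unfold Amat
  rw [Finset.sum_mul]
  exact Finset.sum_congr rfl fun i _ => by ring

/-- Lee–Seung majorization: for a symmetric entrywise-nonnegative matrix `A` and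
positive vector `h`, `dᵀAd ≤ Σ_p ((Ah)_p / h_p) d_p²`. -/
lemma psd_bound {r : ℕ} (A : Fin r → Fin r → ℝ) (hA : ∀ p q, 0 ≤ A p q)
    (hsym : ∀ p q, A p q = A q p) (h : Fin r → ℝ) (hpos : ∀ p, 0 < h p)
    (d : Fin r → ℝ) :
    ∑ p, ∑ q, A p q * (d p * d q) ≤ ∑ p, ((∑ q, A p q * h q) / h p) * d p ^ 2 := by
  have hne : ∀ p, h p ≠ 0 := fun p => (hpos p).ne'
  have e1 : ∑ p, ((∑ q, A p q * h q) / h p) * d p ^ 2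
      = ∑ p, ∑ q, A p q * (h q / h p * d p ^ 2) := by
    refine Finset.sum_congr rfl fun p _ => ?_
    rw [Finset.sum_div, Finset.sum_mul]
    exact Finset.sum_congr rfl fun q _ => by ring
  have e2 : ∑ p, ∑ q, A p q * (h q / h p * d p ^ 2)
      = ∑ p, ∑ q, A p q * (h p / h q * d q ^ 2) := by
    rw [Finset.sum_comm]
    exact Finset.sum_congr rfl fun p _ => Finset.sum_congr rfl fun q _ => by
      rw [hsym p q]
  have main : 0 ≤ ∑ p, ∑ q, A p q *
      (h q / h p * d p ^ 2 + h p / h q * d q ^ 2 - 2 * (d p * d q)) := by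
    refine Finset.sum_nonneg fun p _ => Finset.sum_nonneg fun q _ => ?_
    refine mul_nonneg (hA p q) ?_
    have hapos : 0 < h q / h p := div_pos (hpos q) (hpos p)
    have hinv : h p / h q = (h q / h p)⁻¹ := by
      rw [inv_div]
    have gen : ∀ a x y : ℝ, a ≠ 0 →
        a * x ^ 2 + a⁻¹ * y ^ 2 - 2 * (x * y) = (a * x - y) ^ 2 / a := by
      intro a x y ha
      field_simp
      ring
    have key : h q / h p * d p ^ 2 + h p / h q * d q ^ 2 - 2 * (d p * d q)
        = (h q / h p * d p - d q) ^ 2 / (h q / h p) := by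
      rw [hinv]
      exact gen _ _ _ hapos.ne'
    rw [key]
    exact div_nonneg (sq_nonneg _) hapos.le
  have expand : ∑ p, ∑ q, A p q *
      (h q / h p * d p ^ 2 + h p / h q * d q ^ 2 - 2 * (d p * d q))
      = ∑ p, ∑ q, A p q * (h q / h p * d p ^ 2)
      + ∑ p, ∑ q, A p q * (h p / h q * d q ^ 2)
      - 2 * ∑ p, ∑ q, A p q * (d p * d q) := by
    rw [Finset.mul_sum, ← Finset.sum_add_distrib, ← Finset.sum_sub_distrib]
    refine Finset.sum_congr rfl fun p _ => ?_
    rw [Finset.mul_sum, ← Finset.sum_add_distrib, ← Finset.sum_sub_distrib]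
    exact Finset.sum_congr rfl fun q _ => by ring
  rw [e1]
  rw [expand, ← e2] at main
  linarith

/-- One column of the δ-truncated multiplicative update does not increase
the squared residual. -/
lemma col_step (hm : 1 ≤ m) {δ : ℝ} (hδ : 0 < δ)
    (v : Fin m → ℝ)
    (W : Fin m → Fin r → ℝ) (hW : ∀ i p, δ ≤ W i p)
    (h h' : Fin r → ℝ) (hh : ∀ p, δ ≤ h p)
    (hh' : ∀ p, h' p = max δ (h p * cvec W v p / Ahvec W h p)) :
    ∑ i, (v i - ∑ p, W i p * h' p) ^ 2 ≤ ∑ i, (v i - ∑ p, W i p * h p) ^ 2 := by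
  have hhpos : ∀ p, 0 < h p := fun p => hδ.trans_le (hh p)
  have hAh : ∀ p, 0 < Ahvec W h p := Ahvec_pos hm hδ W hW h hh
  set d : Fin r → ℝ := fun p => h' p - h p with hd
  -- quadratic expansion
  have eq1 : ∑ i, (v i - ∑ p, W i p * h' p) ^ 2
      = ∑ i, (v i - ∑ p, W i p * h p) ^ 2
      + ∑ p, (2 * Ahvec W h p - 2 * cvec W v p) * d p
      + ∑ i, (∑ p, W i p * d p) ^ 2 := by
    have hsplit : ∀ i, v i - ∑ p, W i p * h' p
        = (v i - ∑ p, W i p * h p) - ∑ p, W i p * d p := by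
      intro i
      have : ∑ p, W i p * h' p = ∑ p, W i p * h p + ∑ p, W i p * d p := by
        rw [← Finset.sum_add_distrib]
        refine Finset.sum_congr rfl fun p _ => ?_
        have : d p = h' p - h p := rfl
        rw [this]; ring
      rw [this]; ring
    have e2 : ∑ i, (v i - ∑ p, W i p * h' p) ^ 2
        = ∑ i, ((v i - ∑ p, W i p * h p) ^ 2
          - 2 * ((v i - ∑ q, W i q * h q) * (∑ p, W i p * d p))
          + (∑ p, W i p * d p) ^ 2) := by
      refine Finset.sum_congr rfl fun i _ => ?_
      rw [hsplit i]; ring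
    have e3 : ∑ i, 2 * ((v i - ∑ q, W i q * h q) * (∑ p, W i p * d p))
        = 2 * ∑ p, (cvec W v p - Ahvec W h p) * d p := by
      rw [Finset.mul_sum]
      have e4 : ∀ i, 2 * ((v i - ∑ q, W i q * h q) * (∑ p, W i p * d p))
          = ∑ p, 2 * (W i p * (v i - ∑ q, W i q * h q)) * d p := by
        intro i
        rw [Finset.mul_sum, Finset.mul_sum]
        exact Finset.sum_congr rfl fun p _ => by ring
      rw [Finset.sum_congr rfl fun i _ => e4 i, Finset.sum_comm]
      refine Finset.sum_congr rfl fun p _ => ?_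
      have e6 : ∑ x, 2 * (W x p * (v x - ∑ q, W x q * h q)) * d p
          = (∑ x, W x p * (v x - ∑ q, W x q * h q)) * (2 * d p) := by
        rw [Finset.sum_mul]
        exact Finset.sum_congr rfl fun i _ => by ring
      rw [e6, cross W v h p]; ring
    have e5 : ∑ p, (2 * Ahvec W h p - 2 * cvec W v p) * d p
        = -(2 * ∑ p, (cvec W v p - Ahvec W h p) * d p) := by
      rw [Finset.mul_sum, ← Finset.sum_neg_distrib]
      exact Finset.sum_congr rfl fun p _ => by ring
    rw [e2, Finset.sum_add_distrib, Finset.sum_sub_distrib, e3, e5]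
    ring
  -- majorize the quadratic term
  have hQ : ∑ i, (∑ p, W i p * d p) ^ 2 ≤ ∑ p, (Ahvec W h p / h p) * d p ^ 2 := by
    rw [Qexp W d]
    exact psd_bound (Amat W) (fun p q => (Amat_pos hm hδ W hW p q).le)
      (Amat_symm W) h hhpos d
  -- coordinatewise descent
  have phi : ∀ p, (2 * Ahvec W h p - 2 * cvec W v p) * d p
      + (Ahvec W h p / h p) * d p ^ 2 ≤ 0 := by
    intro p
    set x : ℝ := h p * cvec W v p / Ahvec W h p with hx
    have hident : (2 * Ahvec W h p - 2 * cvec W v p) * d p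
        + (Ahvec W h p / h p) * d p ^ 2
        = (Ahvec W h p / h p) * ((h' p - x) ^ 2 - (h p - x) ^ 2) := by
      simp only [hd, hx]
      field_simp [(hhpos p).ne', (hAh p).ne']
      ring
    have hsq : (h' p - x) ^ 2 ≤ (h p - x) ^ 2 := by
      rcases le_or_gt δ x with hc | hc
      · rw [hh' p, max_eq_right hc]
        simpa using sq_nonneg (h p - x)
      · rw [hh' p, max_eq_left hc.le]
        have h1 : x < δ := hc
        have h2 : δ ≤ h p := hh p
        apply sq_le_sq'
        · nlinarith
        · nlinarith
    calc (2 * Ahvec W h p - 2 * cvec W v p) * d p + (Ahvec W h p / h p) * d p ^ 2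
        = (Ahvec W h p / h p) * ((h' p - x) ^ 2 - (h p - x) ^ 2) := hident
      _ ≤ 0 := mul_nonpos_of_nonneg_of_nonpos
          (div_nonneg (hAh p).le (hhpos p).le) (by linarith)
  calc ∑ i, (v i - ∑ p, W i p * h' p) ^ 2
      = ∑ i, (v i - ∑ p, W i p * h p) ^ 2
      + ∑ p, (2 * Ahvec W h p - 2 * cvec W v p) * d p
      + ∑ i, (∑ p, W i p * d p) ^ 2 := eq1
    _ ≤ ∑ i, (v i - ∑ p, W i p * h p) ^ 2
      + ∑ p, (2 * Ahvec W h p - 2 * cvec W v p) * d p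
      + ∑ p, (Ahvec W h p / h p) * d p ^ 2 := by linarith
    _ = ∑ i, (v i - ∑ p, W i p * h p) ^ 2
      + ∑ p, ((2 * Ahvec W h p - 2 * cvec W v p) * d p
        + (Ahvec W h p / h p) * d p ^ 2) := by
        rw [Finset.sum_add_distrib]; ring
    _ ≤ ∑ i, (v i - ∑ p, W i p * h p) ^ 2 + 0 := by
        have := Finset.sum_nonpos (fun p (_ : p ∈ Finset.univ) => phi p)
        linarith
    _ = ∑ i, (v i - ∑ p, W i p * h p) ^ 2 := by ring

end MUaux

/-- The δ-truncated multiplicative update of `H` does not increase the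
Frobenius norm of the residual `M - W H`. -/
theorem mu_delta_update_H_nonincreasing {m n r : ℕ}
    (hm : 1 ≤ m) (hn : 1 ≤ n) (hr : 1 ≤ r)
    (δ : ℝ) (hδ : 0 < δ)
    (M : Matrix (Fin m) (Fin n) ℝ) (hM : ∀ i j, 0 ≤ M i j)
    (W : Matrix (Fin m) (Fin r) ℝ) (hW : ∀ i p, δ ≤ W i p)
    (H : Matrix (Fin r) (Fin n) ℝ) (hH : ∀ p j, δ ≤ H p j)
    (H' : Matrix (Fin r) (Fin n) ℝ)
    (hH' : ∀ p j, H' p j = max δ (H p j * (Wᵀ * M) p j / (Wᵀ * W * H) p j)) :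
    frobNorm (M - W * H') ≤ frobNorm (M - W * H) := by
  unfold frobNorm
  apply Real.sqrt_le_sqrt
  rw [Finset.sum_comm, Finset.sum_comm (f := fun i j => (M - W * H) i j ^ 2)]
  refine Finset.sum_le_sum fun j _ => ?_
  simp only [Matrix.sub_apply, Matrix.mul_apply]
  refine MUaux.col_step hm hδ (fun i => M i j) (fun i p => W i p) hW
    (fun p => H p j) (fun p => H' p j) (fun p => hH p j) (fun p => ?_)
  have := hH' p j
  simp only [Matrix.mul_apply, Matrix.transpose_apply] at this
  simpa [MUaux.cvec, MUaux.Ahvec, MUaux.Amat] using this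
end

section
/- Let δ > 0, let M be an m×n real matrix with all entries nonnegative, and let W ∈ ℝ^{m×r}, H ∈ ℝ^{r×n} have all entries at least δ (with m, n, r ≥ 1). Suppose (W, H) is a fixed point of both δ-truncated multiplicative updates, i.e. W_{ip} = max(δ, W_{ip} (M Hᵀ)_{ip} / (W H Hᵀ)_{ip}) for all i, p, and H_{pj} = max(δ, H_{pj} (Wᵀ M)_{pj} / (Wᵀ W H)_{pj}) for all p, j. Then (W, H) satisfies the first-order stationarity conditions of the problem min_{W ≥ δ, H ≥ δ} ‖M − WH‖_F²: for every (i, p), (W H Hᵀ − M Hᵀ)_{ip} ≥ 0, and (W H Hᵀ − M Hᵀ)_{ip} = 0 whenever W_{ip} > δ; and for every (p, j), (Wᵀ W H − Wᵀ M)_{pj} ≥ 0, and (Wᵀ W H − Wᵀ M)_{pj} = 0 whenever H_{pj} > δ. -/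
open Matrix

private lemma key_lemma {δ w a b : ℝ} (hδ : 0 < δ) (hw : δ ≤ w) (hb : 0 < b)
    (hfix : w = max δ (w * a / b)) : a ≤ b ∧ (δ < w → b - a = 0) := by
  have hw0 : 0 < w := lt_of_lt_of_le hδ hw
  have h1 : w * a / b ≤ w := by
    conv_rhs => rw [hfix]
    exact le_max_right _ _
  have hab : a ≤ b := by
    have := (div_le_iff₀ hb).mp h1
    nlinarith
  refine ⟨hab, fun hlt => ?_⟩
  have hx : w * a / b = w := by
    rcases max_cases δ (w * a / b) with ⟨h, _⟩ | ⟨h, _⟩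
    · rw [← hfix] at h; exact absurd h (ne_of_lt hlt).symm
    · rw [← hfix] at h; exact h.symm
  have : a = b := by
    field_simp at hx
    rcases hx with h | h
    · rfl
  linarith

/-- A fixed point of both δ-truncated multiplicative updates satisfies the
first-order (KKT) stationarity conditions of `min_{W ≥ δ, H ≥ δ} ‖M − WH‖_F²`. -/
theorem mu_delta_fixed_point_is_stationary {m n r : ℕ}
    (hm : 1 ≤ m) (hn : 1 ≤ n) (hr : 1 ≤ r)
    (δ : ℝ) (hδ : 0 < δ)
    (M : Matrix (Fin m) (Fin n) ℝ) (hM : ∀ i j, 0 ≤ M i j)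
    (W : Matrix (Fin m) (Fin r) ℝ) (hW : ∀ i p, δ ≤ W i p)
    (H : Matrix (Fin r) (Fin n) ℝ) (hH : ∀ p j, δ ≤ H p j)
    (hfixW : ∀ i p, W i p = max δ (W i p * (M * Hᵀ) i p / (W * H * Hᵀ) i p))
    (hfixH : ∀ p j, H p j = max δ (H p j * (Wᵀ * M) p j / (Wᵀ * W * H) p j)) :
    (∀ i p, 0 ≤ (W * H * Hᵀ - M * Hᵀ) i p) ∧
    (∀ i p, δ < W i p → (W * H * Hᵀ - M * Hᵀ) i p = 0) ∧
    (∀ p j, 0 ≤ (Wᵀ * W * H - Wᵀ * M) p j) ∧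
    (∀ p j, δ < H p j → (Wᵀ * W * H - Wᵀ * M) p j = 0) := by
  have hW0 : ∀ i p, 0 < W i p := fun i p => lt_of_lt_of_le hδ (hW i p)
  have hH0 : ∀ p j, 0 < H p j := fun p j => lt_of_lt_of_le hδ (hH p j)
  -- positivity of denominators
  have hbW : ∀ i p, 0 < (W * H * Hᵀ) i p := by
    intro i p
    simp only [mul_apply, transpose_apply]
    apply Finset.sum_pos
    · intro j _
      exact mul_pos (Finset.sum_pos (fun q _ => mul_pos (hW0 i q) (hH0 q j))
        (Finset.univ_nonempty_iff.mpr ⟨⟨0, hr⟩⟩)) (hH0 p j)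
    · exact Finset.univ_nonempty_iff.mpr ⟨⟨0, hn⟩⟩
  have hbH : ∀ p j, 0 < (Wᵀ * W * H) p j := by
    intro p j
    simp only [mul_apply, transpose_apply]
    apply Finset.sum_pos
    · intro q _
      exact mul_pos (Finset.sum_pos (fun i _ => mul_pos (hW0 i p) (hW0 i q))
        (Finset.univ_nonempty_iff.mpr ⟨⟨0, hm⟩⟩)) (hH0 q j)
    · exact Finset.univ_nonempty_iff.mpr ⟨⟨0, hr⟩⟩
  have kW : ∀ i p, (M * Hᵀ) i p ≤ (W * H * Hᵀ) i p ∧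
      (δ < W i p → (W * H * Hᵀ) i p - (M * Hᵀ) i p = 0) :=
    fun i p => key_lemma hδ (hW i p) (hbW i p) (hfixW i p)
  have kH : ∀ p j, (Wᵀ * M) p j ≤ (Wᵀ * W * H) p j ∧
      (δ < H p j → (Wᵀ * W * H) p j - (Wᵀ * M) p j = 0) :=
    fun p j => key_lemma hδ (hH p j) (hbH p j) (hfixH p j)
  refine ⟨fun i p => ?_, fun i p h => ?_, fun p j => ?_, fun p j h => ?_⟩
  · simp only [Matrix.sub_apply]; linarith [(kW i p).1]
  · simp only [Matrix.sub_apply]; linarith [(kW i p).2 h]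
  · simp only [Matrix.sub_apply]; linarith [(kH p j).1]
  · simp only [Matrix.sub_apply]; linarith [(kH p j).2 h]
end

section
/- Let M be an m×n real matrix with all entries nonnegative, and let W ∈ ℝ^{m×r} and H ∈ ℝ^{r×n} have all entries strictly positive (with m, n, r ≥ 1). Define the multiplicative update W' of Lee and Seung entrywise by W'_{ip} = W_{ip} · (M Hᵀ)_{ip} / (W H Hᵀ)_{ip}. Then ‖M − W' H‖_F ≤ ‖M − W H‖_F. -/
open Matrix

lemma symm_sum_nonneg {r : ℕ} (F : Fin r → Fin r → ℝ) (h : ∀ p q, 0 ≤ F p q + F q p) :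
    0 ≤ ∑ p, ∑ q, F p q := by
  have hc : ∑ p, ∑ q, F q p = ∑ p, ∑ q, F p q := Finset.sum_comm
  have h2 : 0 ≤ ∑ p, ∑ q, (F p q + F q p) :=
    Finset.sum_nonneg fun p _ => Finset.sum_nonneg fun q _ => h p q
  simp only [Finset.sum_add_distrib] at h2
  linarith

lemma mu_row_key {r n : ℕ} (H : Fin r → Fin n → ℝ) (hH : ∀ p j, 0 ≤ H p j)
    (w w' : Fin r → ℝ) (hw : ∀ p, 0 < w p) (v : Fin n → ℝ)
    (hd : ∀ p, w p * ((∑ j, v j * H p j) - ∑ q, w q * ∑ j, H q j * H p j)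
        = (∑ q, w q * ∑ j, H q j * H p j) * (w' p - w p)) :
    ∑ j, (v j - ∑ p, w' p * H p j) ^ 2 ≤ ∑ j, (v j - ∑ p, w p * H p j) ^ 2 := by
  set b : Fin r → ℝ := fun p => ∑ j, v j * H p j with hb
  set a : Fin r → Fin r → ℝ := fun p q => ∑ j, H p j * H q j with ha
  set s : Fin r → ℝ := fun p => ∑ q, w q * a q p with hs
  set d : Fin r → ℝ := fun p => w' p - w p with hdd
  set e : Fin n → ℝ := fun j => v j - ∑ p, w p * H p j with he
  set g : Fin n → ℝ := fun j => ∑ p, d p * H p j with hg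
  have ha_nonneg : ∀ p q, 0 ≤ a p q :=
    fun p q => Finset.sum_nonneg fun j _ => mul_nonneg (hH p j) (hH q j)
  have ha_symm : ∀ p q, a p q = a q p := by
    intro p q; simp only [ha]; exact Finset.sum_congr rfl fun j _ => mul_comm _ _
  have hs_nonneg : ∀ p, 0 ≤ s p :=
    fun p => Finset.sum_nonneg fun q _ => mul_nonneg (hw q).le (ha_nonneg q p)
  -- rewrite LHS summand: residual = e j - g j
  have heg : ∀ j, v j - ∑ p, w' p * H p j = e j - g j := by
    intro j; simp only [he, hg, hdd]
    rw [sub_sub, ← Finset.sum_add_distrib]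
    congr 1
    exact Finset.sum_congr rfl fun p _ => by ring
  -- cross term : ∑ j, e j * g j = T := ∑ p, s p * d p ^ 2 / w p
  have hcross : ∑ j, e j * g j = ∑ p, s p * d p ^ 2 / w p := by
    have h1 : ∑ j, e j * g j = ∑ p, d p * ∑ j, e j * H p j := by
      simp only [hg, Finset.mul_sum]
      rw [Finset.sum_comm]
      exact Finset.sum_congr rfl fun p _ => Finset.sum_congr rfl fun j _ => by ring
    have h2 : ∀ p, ∑ j, e j * H p j = b p - s p := by
      intro p
      simp only [he, hb, hs, ha, sub_mul, Finset.sum_sub_distrib, Finset.sum_mul]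
      congr 1
      rw [Finset.sum_comm]
      exact Finset.sum_congr rfl fun q _ => by
        rw [Finset.mul_sum]
        exact Finset.sum_congr rfl fun j _ => by ring
    rw [h1]
    refine Finset.sum_congr rfl fun p _ => ?_
    rw [h2 p]
    have h := hd p
    have hwp := (hw p).ne'
    field_simp
    linear_combination d p * h
  -- quadratic term : ∑ j, g j ^ 2 = Q := ∑ p, ∑ q, d p * d q * a p q
  have hquad : ∑ j, g j ^ 2 = ∑ p, ∑ q, d p * d q * a p q := by
    have hsq : ∀ j, g j ^ 2 = ∑ p, ∑ q, (d p * H p j) * (d q * H q j) := by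
      intro j
      simp only [hg]
      rw [sq, Finset.sum_mul_sum]
    rw [Finset.sum_congr rfl fun j _ => hsq j, Finset.sum_comm]
    refine Finset.sum_congr rfl fun p _ => ?_
    rw [Finset.sum_comm]
    refine Finset.sum_congr rfl fun q _ => ?_
    simp only [ha, Finset.mul_sum]
    exact Finset.sum_congr rfl fun j _ => by ring
  -- key inequality : Q ≤ T
  have hkey : ∑ p, ∑ q, d p * d q * a p q ≤ ∑ p, s p * d p ^ 2 / w p := by
    have hT : ∑ p, s p * d p ^ 2 / w p = ∑ p, ∑ q, w q * a q p * d p ^ 2 / w p := by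
      refine Finset.sum_congr rfl fun p _ => ?_
      rw [hs, Finset.sum_mul, Finset.sum_div]
    rw [hT, ← sub_nonneg, ← Finset.sum_sub_distrib]
    have : ∀ p, (∑ q, w q * a q p * d p ^ 2 / w p) - ∑ q, d p * d q * a p q
        = ∑ q, (w q * a q p * d p ^ 2 / w p - d p * d q * a p q) := by
      intro p; rw [Finset.sum_sub_distrib]
    rw [Finset.sum_congr rfl fun p _ => this p]
    apply symm_sum_nonneg
    intro p q
    have hF : (w q * a q p * d p ^ 2 / w p - d p * d q * a p q)
        + (w p * a p q * d q ^ 2 / w q - d q * d p * a q p)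
        = a p q * (w q * d p - w p * d q) ^ 2 / (w p * w q) := by
      rw [ha_symm p q]
      field_simp [(hw p).ne', (hw q).ne']
      ring
    rw [hF]
    exact div_nonneg (mul_nonneg (ha_nonneg p q) (sq_nonneg _)) (mul_pos (hw p) (hw q)).le
  -- assemble
  calc ∑ j, (v j - ∑ p, w' p * H p j) ^ 2
      = ∑ j, (e j ^ 2 - 2 * (e j * g j) + g j ^ 2) := by
        refine Finset.sum_congr rfl fun j _ => ?_
        rw [heg j]; ring
    _ = (∑ j, e j ^ 2) - 2 * (∑ j, e j * g j) + ∑ j, g j ^ 2 := by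
        rw [Finset.sum_add_distrib, Finset.sum_sub_distrib, Finset.mul_sum]
    _ ≤ ∑ j, e j ^ 2 := by
        rw [hcross, hquad]
        have hTnn : 0 ≤ ∑ p, s p * d p ^ 2 / w p :=
          Finset.sum_nonneg fun p _ =>
            div_nonneg (mul_nonneg (hs_nonneg p) (sq_nonneg _)) (hw p).le
        linarith
    _ = ∑ j, (v j - ∑ p, w p * H p j) ^ 2 := rfl

/-- The multiplicative update of Lee and Seung does not increase the
Frobenius norm of the residual `M - W H`. -/
theorem mu_lee_seung_update_nonincreasing {m n r : ℕ}
    (hm : 1 ≤ m) (hn : 1 ≤ n) (hr : 1 ≤ r)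
    (M : Matrix (Fin m) (Fin n) ℝ) (hM : ∀ i j, 0 ≤ M i j)
    (W : Matrix (Fin m) (Fin r) ℝ) (hW : ∀ i p, 0 < W i p)
    (H : Matrix (Fin r) (Fin n) ℝ) (hH : ∀ p j, 0 < H p j)
    (W' : Matrix (Fin m) (Fin r) ℝ)
    (hW' : ∀ i p, W' i p = W i p * (M * Hᵀ) i p / (W * H * Hᵀ) i p) :
    frobNorm (M - W' * H) ≤ frobNorm (M - W * H) := by
  unfold frobNorm
  apply Real.sqrt_le_sqrt
  apply Finset.sum_le_sum
  intro i _
  have hMH : ∀ p, (M * Hᵀ) i p = ∑ j, M i j * H p j := by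
    intro p; simp [Matrix.mul_apply, Matrix.transpose_apply]
  have hWHH : ∀ p, (W * H * Hᵀ) i p = ∑ q, W i q * ∑ j, H q j * H p j := by
    intro p
    simp only [Matrix.mul_apply, Matrix.transpose_apply, Finset.sum_mul]
    rw [Finset.sum_comm]
    exact Finset.sum_congr rfl fun q _ => by
      rw [Finset.mul_sum]
      exact Finset.sum_congr rfl fun j _ => by ring
  have hspos : ∀ p, 0 < ∑ q, W i q * ∑ j, H q j * H p j := by
    intro p
    refine Finset.sum_pos (fun q _ => mul_pos (hW i q) ?_) ⟨⟨0, hr⟩, Finset.mem_univ _⟩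
    exact Finset.sum_pos (fun j _ => mul_pos (hH q j) (hH p j)) ⟨⟨0, hn⟩, Finset.mem_univ _⟩
  have key := mu_row_key (fun p j => H p j) (fun p j => (hH p j).le)
      (W i) (W' i) (fun p => hW i p) (M i) ?_
  · simpa [Matrix.sub_apply, Matrix.mul_apply] using key
  · intro p
    have h := hW' i p
    rw [hMH p, hWHH p] at h
    rw [h]
    have hs := (hspos p).ne'
    field_simp
end

section
/- Let δ > 0, let M be an m×n real matrix with all entries nonnegative, let H ∈ ℝ^{r×n} have all entries at least δ, and let W^{(0)} ∈ ℝ^{m×r} have all entries at least δ (with m, n, r ≥ 1). Define the inner iteration sequence W^{(l+1)}_{ip} = max(δ, W^{(l)}_{ip} · (M Hᵀ)_{ip} / (W^{(l)} H Hᵀ)_{ip}). Then every iterate W^{(l)} has all entries at least δ, and the sequence of errors l ↦ ‖M − W^{(l)} H‖_F is nonincreasing. -/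
open Matrix

/-- Per-row decrease of the residual under the δ-truncated multiplicative update. -/
lemma mu_row_decrease {n r : ℕ} (hn : 1 ≤ n) (hr : 1 ≤ r)
    (δ : ℝ) (hδ : 0 < δ)
    (Mi : Fin n → ℝ)
    (H : Matrix (Fin r) (Fin n) ℝ) (hH : ∀ p j, δ ≤ H p j)
    (w w' : Fin r → ℝ) (hw : ∀ p, δ ≤ w p)
    (hupd : ∀ p, w' p =
      max δ (w p * (∑ j, Mi j * H p j) / (∑ q, w q * ∑ j, H q j * H p j))) :
    ∑ j, (Mi j - ∑ p, w' p * H p j) ^ 2 ≤ ∑ j, (Mi j - ∑ p, w p * H p j) ^ 2 := by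
  haveI : NeZero n := ⟨by omega⟩
  haveI : NeZero r := ⟨by omega⟩
  set S : Fin r → Fin r → ℝ := fun p q => ∑ j, H p j * H q j with hS
  set a : Fin r → ℝ := fun p => ∑ j, Mi j * H p j with ha
  set b : Fin r → ℝ := fun p => ∑ q, w q * S q p with hb
  set d : Fin r → ℝ := fun p => w' p - w p with hd
  set e : Fin n → ℝ := fun j => Mi j - ∑ p, w p * H p j with he
  have hwpos : ∀ p, 0 < w p := fun p => lt_of_lt_of_le hδ (hw p)
  have hSsym : ∀ p q, S p q = S q p := by
    intro p q; simp only [hS]; exact Finset.sum_congr rfl fun j _ => mul_comm _ _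
  have hSpos : ∀ p q, 0 < S p q := by
    intro p q
    apply Finset.sum_pos
    · intro j _; exact mul_pos (lt_of_lt_of_le hδ (hH p j)) (lt_of_lt_of_le hδ (hH q j))
    · exact Finset.univ_nonempty
  have hbpos : ∀ p, 0 < b p := by
    intro p
    apply Finset.sum_pos
    · intro q _; exact mul_pos (hwpos q) (hSpos q p)
    · exact Finset.univ_nonempty
  -- residual identity
  have hres : ∀ j, (Mi j - ∑ p, w' p * H p j) = e j - ∑ p, d p * H p j := by
    intro j
    have h1 : (∑ p, w' p * H p j) = (∑ p, w p * H p j) + ∑ p, d p * H p j := by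
      rw [← Finset.sum_add_distrib]
      apply Finset.sum_congr rfl
      intro p _
      simp only [hd]; ring
    simp only [he]
    rw [h1]; ring
  -- cross term identity: ∑ j, e j * H p j = a p - b p
  have hcross : ∀ p, (∑ j, e j * H p j) = a p - b p := by
    intro p
    simp only [he, sub_mul]
    rw [Finset.sum_sub_distrib]
    have h2 : (∑ j, (∑ q, w q * H q j) * H p j) = b p := by
      simp_rw [Finset.sum_mul, mul_assoc]
      rw [Finset.sum_comm]
      simp_rw [← Finset.mul_sum]
      rfl
    rw [h2]
  -- quadratic term
  have hq2 : (∑ j, (∑ p, d p * H p j) ^ 2) = ∑ p, ∑ q, d p * d q * S p q := by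
    calc (∑ j, (∑ p, d p * H p j) ^ 2)
        = ∑ j, ∑ p, ∑ q, (d p * H p j) * (d q * H q j) := by
          apply Finset.sum_congr rfl
          intro j _
          rw [sq, Finset.sum_mul_sum]
      _ = ∑ p, ∑ j, ∑ q, (d p * H p j) * (d q * H q j) := Finset.sum_comm
      _ = ∑ p, ∑ q, ∑ j, (d p * H p j) * (d q * H q j) := by
          apply Finset.sum_congr rfl
          intro p _
          exact Finset.sum_comm
      _ = ∑ p, ∑ q, d p * d q * S p q := by
          apply Finset.sum_congr rfl
          intro p _
          apply Finset.sum_congr rfl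
          intro q _
          simp only [hS, Finset.mul_sum]
          apply Finset.sum_congr rfl
          intro j _
          ring
  -- cross term sum
  have hc2 : (∑ j, 2 * e j * (∑ p, d p * H p j)) = 2 * ∑ p, d p * (a p - b p) := by
    calc (∑ j, 2 * e j * (∑ p, d p * H p j))
        = ∑ j, ∑ p, 2 * (d p * (e j * H p j)) := by
          apply Finset.sum_congr rfl
          intro j _
          rw [Finset.mul_sum]
          apply Finset.sum_congr rfl
          intro p _
          ring
      _ = ∑ p, ∑ j, 2 * (d p * (e j * H p j)) := Finset.sum_comm
      _ = ∑ p, 2 * (d p * (a p - b p)) := by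
          apply Finset.sum_congr rfl
          intro p _
          rw [← Finset.mul_sum, ← Finset.mul_sum, hcross p]
      _ = 2 * ∑ p, d p * (a p - b p) := by rw [Finset.mul_sum]
  -- expansion of the new residual
  have hexp : (∑ j, (Mi j - ∑ p, w' p * H p j) ^ 2) =
      (∑ j, e j ^ 2) - 2 * (∑ p, d p * (a p - b p)) + ∑ p, ∑ q, d p * d q * S p q := by
    have h1 : ∀ j, (Mi j - ∑ p, w' p * H p j) ^ 2 =
        e j ^ 2 - 2 * e j * (∑ p, d p * H p j) + (∑ p, d p * H p j) ^ 2 := by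
      intro j
      rw [hres j]
      ring
    simp_rw [h1]
    rw [Finset.sum_add_distrib, Finset.sum_sub_distrib, hc2, hq2]
  -- Step A: majorization
  have stepA : (∑ p, ∑ q, d p * d q * S p q) ≤ ∑ p, (b p / w p) * d p ^ 2 := by
    have key : ∀ p q, 2 * (d p * d q * S p q) ≤
        S p q * ((w q / w p) * d p ^ 2) + S p q * ((w p / w q) * d q ^ 2) := by
      intro p q
      have hp := hwpos p
      have hq := hwpos q
      have h1 : (0:ℝ) ≤ (w q * d p - w p * d q) ^ 2 / (w p * w q) :=
        div_nonneg (sq_nonneg _) (le_of_lt (mul_pos hp hq))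
      have h2 : (w q / w p) * d p ^ 2 + (w p / w q) * d q ^ 2 - 2 * (d p * d q) =
          (w q * d p - w p * d q) ^ 2 / (w p * w q) := by
        field_simp
        ring
      have h3 : 2 * (d p * d q) ≤ (w q / w p) * d p ^ 2 + (w p / w q) * d q ^ 2 := by
        linarith
      have hSnn : 0 ≤ S p q := le_of_lt (hSpos p q)
      calc 2 * (d p * d q * S p q) = S p q * (2 * (d p * d q)) := by ring
        _ ≤ S p q * ((w q / w p) * d p ^ 2 + (w p / w q) * d q ^ 2) :=
            mul_le_mul_of_nonneg_left h3 hSnn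
        _ = S p q * ((w q / w p) * d p ^ 2) + S p q * ((w p / w q) * d q ^ 2) := by ring
    have hsum : 2 * (∑ p, ∑ q, d p * d q * S p q) ≤
        (∑ p, ∑ q, S p q * ((w q / w p) * d p ^ 2)) +
        (∑ p, ∑ q, S p q * ((w p / w q) * d q ^ 2)) := by
      rw [Finset.mul_sum, ← Finset.sum_add_distrib]
      apply Finset.sum_le_sum
      intro p _
      rw [Finset.mul_sum, ← Finset.sum_add_distrib]
      exact Finset.sum_le_sum fun q _ => key p q
    have hswap : (∑ p, ∑ q, S p q * ((w p / w q) * d q ^ 2)) =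
        ∑ p, ∑ q, S p q * ((w q / w p) * d p ^ 2) := by
      rw [Finset.sum_comm]
      apply Finset.sum_congr rfl
      intro p _
      apply Finset.sum_congr rfl
      intro q _
      rw [hSsym q p]
    have hdiag : ∀ p, (∑ q, S p q * ((w q / w p) * d p ^ 2)) = (b p / w p) * d p ^ 2 := by
      intro p
      have hwne : w p ≠ 0 := ne_of_gt (hwpos p)
      have h4 : (∑ q, S p q * ((w q / w p) * d p ^ 2)) =
          (∑ q, w q * S q p) * (d p ^ 2 / w p) := by
        rw [Finset.sum_mul]
        apply Finset.sum_congr rfl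
        intro q _
        rw [hSsym p q]
        field_simp
      rw [h4]
      simp only [hb]
      ring
    rw [hswap] at hsum
    simp_rw [hdiag] at hsum
    linarith
  -- Step B: per coordinate
  have stepB : ∀ p, d p * (2 * (b p - a p)) + (b p / w p) * d p ^ 2 ≤ 0 := by
    intro p
    have hbne : b p ≠ 0 := ne_of_gt (hbpos p)
    have hwne : w p ≠ 0 := ne_of_gt (hwpos p)
    set t : ℝ := w p * a p / b p with ht
    have hw'p : w' p = max δ t := hupd p
    have key : (w' p - t) ^ 2 ≤ (w p - t) ^ 2 := by
      rcases le_or_gt δ t with hc | hc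
      · rw [hw'p, max_eq_right hc]
        simpa using sq_nonneg (w p - t)
      · rw [hw'p, max_eq_left (le_of_lt hc)]
        have h1 : 0 ≤ δ - t := by linarith
        have h2 : δ - t ≤ w p - t := by linarith [hw p]
        nlinarith
    have hid : d p * (2 * (b p - a p)) + (b p / w p) * d p ^ 2 =
        (b p / w p) * ((w' p - t) ^ 2 - (w p - t) ^ 2) := by
      simp only [hd, ht]
      field_simp
      ring
    rw [hid]
    apply mul_nonpos_of_nonneg_of_nonpos
    · exact le_of_lt (div_pos (hbpos p) (hwpos p))
    · linarith
  -- combine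
  have hsumB : (∑ p, d p * (2 * (b p - a p))) + (∑ p, (b p / w p) * d p ^ 2) ≤ 0 := by
    rw [← Finset.sum_add_distrib]
    calc (∑ p, (d p * (2 * (b p - a p)) + (b p / w p) * d p ^ 2)) ≤ ∑ p, (0:ℝ) :=
          Finset.sum_le_sum fun p _ => stepB p
      _ = 0 := by simp
  have h5 : (∑ p, d p * (2 * (b p - a p))) = -2 * (∑ p, d p * (a p - b p)) := by
    rw [neg_mul, Finset.mul_sum, ← Finset.sum_neg_distrib]
    apply Finset.sum_congr rfl
    intro p _
    ring
  have heq : (∑ j, (Mi j - ∑ p, w p * H p j) ^ 2) = ∑ j, e j ^ 2 := by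
    apply Finset.sum_congr rfl
    intro j _
    simp [he]
  rw [hexp, heq]
  rw [h5] at hsumB
  linarith

/-- For the inner iteration sequence of δ-truncated multiplicative updates of `W`
(with `H` fixed), every iterate has entries at least `δ`, and the sequence of
residual Frobenius norms is nonincreasing. -/
theorem mu_delta_inner_iterations {m n r : ℕ}
    (hm : 1 ≤ m) (hn : 1 ≤ n) (hr : 1 ≤ r)
    (δ : ℝ) (hδ : 0 < δ)
    (M : Matrix (Fin m) (Fin n) ℝ) (hM : ∀ i j, 0 ≤ M i j)
    (H : Matrix (Fin r) (Fin n) ℝ) (hH : ∀ p j, δ ≤ H p j)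
    (Wseq : ℕ → Matrix (Fin m) (Fin r) ℝ)
    (h0 : ∀ i p, δ ≤ Wseq 0 i p)
    (hstep : ∀ l i p, Wseq (l + 1) i p =
      max δ (Wseq l i p * (M * Hᵀ) i p / (Wseq l * H * Hᵀ) i p)) :
    (∀ l i p, δ ≤ Wseq l i p) ∧
    Antitone (fun l => frobNorm (M - Wseq l * H)) := by
  have hpos : ∀ l i p, δ ≤ Wseq l i p := by
    intro l
    induction l with
    | zero => exact h0
    | succ l ih => intro i p; rw [hstep]; exact le_max_left _ _
  refine ⟨hpos, ?_⟩
  apply antitone_nat_of_succ_le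
  intro l
  unfold frobNorm
  apply Real.sqrt_le_sqrt
  apply Finset.sum_le_sum
  intro i _
  have hMHT : ∀ p, (M * Hᵀ) i p = ∑ j, M i j * H p j := by
    intro p
    simp [Matrix.mul_apply, Matrix.transpose_apply]
  have hWHHT : ∀ p, (Wseq l * H * Hᵀ) i p = ∑ q, Wseq l i q * ∑ j, H q j * H p j := by
    intro p
    simp only [Matrix.mul_apply, Matrix.transpose_apply]
    simp_rw [Finset.sum_mul, mul_assoc]
    rw [Finset.sum_comm]
    simp_rw [← Finset.mul_sum]
  have hsub : ∀ (W : Matrix (Fin m) (Fin r) ℝ) (j : Fin n),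
      (M - W * H) i j = M i j - ∑ p, W i p * H p j := by
    intro W j
    simp [Matrix.sub_apply, Matrix.mul_apply]
  simp_rw [hsub]
  apply mu_row_decrease hn hr δ hδ (M i) H hH (Wseq l i) (Wseq (l + 1) i) (fun p => hpos l i p)
  intro p
  rw [hstep l i p, hMHT p, hWHHT p]
end

section
/- Let M ∈ ℝ^{m×n}, W ∈ ℝ^{m×r}, H ∈ ℝ^{r×n}, and fix an index p with 1 ≤ p ≤ r such that the p-th row H_{p:} of H is nonzero. Define w* ∈ ℝ^m entrywise by w*_i = max(0, ((M Hᵀ)_{ip} − Σ_{l≠p} W_{il} (H Hᵀ)_{lp}) / (H Hᵀ)_{pp}). Then w* is the unique solution of min_{w ∈ ℝ^m, w ≥ 0} ‖M − W[p←w] H‖_F², where W[p←w] denotes the matrix obtained from W by replacing its p-th column with w: for every w ≥ 0 with w ≠ w*, ‖M − W[p←w*] H‖_F < ‖M − W[p←w] H‖_F. -/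
open Matrix Finset

/-- The HALS closed-form update `w*` of the `p`-th column of `W` is the unique
solution of the corresponding nonnegative least squares subproblem. -/
theorem hals_column_update_unique_minimizer {m n r : ℕ}
    (M : Matrix (Fin m) (Fin n) ℝ)
    (W : Matrix (Fin m) (Fin r) ℝ)
    (H : Matrix (Fin r) (Fin n) ℝ)
    (p : Fin r) (hHp : H p ≠ 0)
    (wStar : Fin m → ℝ)
    (hwStar : ∀ i, wStar i = max 0
      (((M * Hᵀ) i p - ∑ l ∈ univ \ {p}, W i l * (H * Hᵀ) l p) / (H * Hᵀ) p p)) :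
    ∀ w : Fin m → ℝ, (∀ i, 0 ≤ w i) → w ≠ wStar →
      frobNorm (M - (W.updateCol p wStar) * H) <
        frobNorm (M - (W.updateCol p w) * H) := by
  intro w hw hne
  set B : ℝ := ∑ j, (H p j) ^ 2 with hB_def
  have hBpos : 0 < B := by
    obtain ⟨j, hj⟩ := Function.ne_iff.mp hHp
    exact Finset.sum_pos' (fun j _ => sq_nonneg _)
      ⟨j, mem_univ j, lt_of_le_of_ne (sq_nonneg _) (Ne.symm (pow_ne_zero 2 hj))⟩
  have hBne : B ≠ 0 := ne_of_gt hBpos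
  set R : Fin m → Fin n → ℝ :=
    fun i j => M i j - ∑ l ∈ univ \ {p}, W i l * H l j with hR
  set c : Fin m → ℝ := fun i => ∑ j, R i j * H p j with hc
  -- entrywise expansion
  have entry : ∀ (v : Fin m → ℝ) (i : Fin m) (j : Fin n),
      (M - (W.updateCol p v) * H) i j = R i j - v i * H p j := by
    intro v i j
    have hsum : ∑ l, (W.updateCol p v) i l * H l j
        = v i * H p j + ∑ l ∈ univ \ {p}, W i l * H l j := by
      rw [Finset.sum_eq_add_sum_sdiff_singleton_of_mem (mem_univ p)]
      congr 1
      · simp [Matrix.updateCol_apply]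
      · refine Finset.sum_congr rfl fun l hl => ?_
        have : l ≠ p := by simpa using (Finset.mem_sdiff.mp hl).2
        simp [Matrix.updateCol_apply, this]
    simp only [Matrix.sub_apply, Matrix.mul_apply, hsum, hR]
    ring
  -- row expansion
  have expand : ∀ (i : Fin m) (t : ℝ),
      (∑ j, (R i j - t * H p j) ^ 2)
        = (∑ j, (R i j) ^ 2) - 2 * t * c i + t ^ 2 * B := by
    intro i t
    have h1 : ∀ j : Fin n, (R i j - t * H p j) ^ 2
        = (R i j) ^ 2 - 2 * t * (R i j * H p j) + t ^ 2 * (H p j) ^ 2 := by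
      intro j; ring
    simp_rw [h1, Finset.sum_add_distrib, Finset.sum_sub_distrib,
      ← Finset.mul_sum]
    rfl
  -- identify c and B with matrix expressions
  have hHHt : ∀ l, (H * Hᵀ) l p = ∑ j, H l j * H p j := by
    intro l; simp [Matrix.mul_apply, Matrix.transpose_apply]
  have hBalt : (H * Hᵀ) p p = B := by
    rw [hHHt]; simp [hB_def, sq]
  have hci : ∀ i, (M * Hᵀ) i p - ∑ l ∈ univ \ {p}, W i l * (H * Hᵀ) l p = c i := by
    intro i
    have h2 : ∑ j, (∑ l ∈ univ \ {p}, W i l * H l j) * H p j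
        = ∑ l ∈ univ \ {p}, W i l * (∑ j, H l j * H p j) := by
      simp_rw [Finset.sum_mul]
      rw [Finset.sum_comm]
      refine Finset.sum_congr rfl fun l _ => ?_
      rw [Finset.mul_sum]
      refine Finset.sum_congr rfl fun j _ => ?_
      ring
    have e1 : (M * Hᵀ) i p = ∑ j, M i j * H p j := by
      simp [Matrix.mul_apply, Matrix.transpose_apply]
    simp only [hc, hR, sub_mul, Finset.sum_sub_distrib, h2, e1, hHHt]
  have hws : ∀ i, wStar i = max 0 (c i / B) := by
    intro i; rw [hwStar i, hBalt, hci]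
  -- key quadratic fact
  have key : ∀ (cc t : ℝ), 0 ≤ t → t ≠ max 0 (cc / B) →
      B * (max 0 (cc / B)) ^ 2 - 2 * cc * (max 0 (cc / B))
        < B * t ^ 2 - 2 * cc * t := by
    intro cc t ht hnet
    rcases le_or_gt cc 0 with hcc | hcc
    · have hdiv : cc / B ≤ 0 := div_nonpos_of_nonpos_of_nonneg hcc (le_of_lt hBpos)
      rw [max_eq_left hdiv] at hnet ⊢
      have htpos : 0 < t := lt_of_le_of_ne ht (Ne.symm hnet)
      nlinarith [mul_pos hBpos (mul_pos htpos htpos),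
        mul_nonneg (neg_nonneg.mpr hcc) (le_of_lt htpos)]
    · have hdiv : 0 ≤ cc / B := le_of_lt (div_pos hcc hBpos)
      rw [max_eq_right hdiv] at hnet ⊢
      have hd : t - cc / B ≠ 0 := sub_ne_zero.mpr hnet
      have hsq : 0 < (t - cc / B) ^ 2 := by positivity
      have hmul : 0 < B * (t - cc / B) ^ 2 := mul_pos hBpos hsq
      have e1 : B * (t - cc / B) ^ 2
          = B * t ^ 2 - 2 * cc * t + cc ^ 2 / B := by
        field_simp; ring
      have e2 : B * (cc / B) ^ 2 - 2 * cc * (cc / B) = -(cc ^ 2 / B) := by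
        field_simp; ring
      linarith [e1 ▸ hmul, e2]
  -- weak version
  have wkey : ∀ (cc t : ℝ), 0 ≤ t →
      B * (max 0 (cc / B)) ^ 2 - 2 * cc * (max 0 (cc / B))
        ≤ B * t ^ 2 - 2 * cc * t := by
    intro cc t ht
    rcases eq_or_ne t (max 0 (cc / B)) with h | h
    · rw [h]
    · exact le_of_lt (key cc t ht h)
  have hwsnn : ∀ i, 0 ≤ wStar i := fun i => by rw [hws i]; exact le_max_left _ _
  -- sum comparison
  have hsumlt : (∑ i, ∑ j, ((M - (W.updateCol p wStar) * H) i j) ^ 2)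
      < ∑ i, ∑ j, ((M - (W.updateCol p w) * H) i j) ^ 2 := by
    simp_rw [entry wStar, entry w, expand]
    obtain ⟨i0, hi0⟩ := Function.ne_iff.mp hne
    refine Finset.sum_lt_sum (fun i _ => ?_) ⟨i0, mem_univ i0, ?_⟩
    · have := wkey (c i) (w i) (hw i)
      rw [← hws i] at this
      nlinarith [this]
    · have hne' : w i0 ≠ max 0 (c i0 / B) := by rw [← hws i0]; exact hi0
      have := key (c i0) (w i0) (hw i0) hne'
      rw [← hws i0] at this
      nlinarith [this]
  have hnn : 0 ≤ ∑ i, ∑ j, ((M - (W.updateCol p wStar) * H) i j) ^ 2 :=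
    Finset.sum_nonneg fun i _ => Finset.sum_nonneg fun j _ => sq_nonneg _
  exact Real.sqrt_lt_sqrt hnn hsumlt
end

section
/- Let M ∈ ℝ^{m×n}, W ∈ ℝ^{m×r} with nonnegative entries, H ∈ ℝ^{r×n}, and fix p with H_{p:} ≠ 0. Let W' be obtained from W by replacing its p-th column with the HALS update w*, where w*_i = max(0, ((M Hᵀ)_{ip} − Σ_{l≠p} W_{il} (H Hᵀ)_{lp}) / (H Hᵀ)_{pp}). Then W' has nonnegative entries and ‖M − W' H‖_F ≤ ‖M − W H‖_F. -/
open Matrix Finset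

private lemma quad_min (a b y : ℝ) (ha : 0 < a) (hy : 0 ≤ y) :
    a * (max 0 (b / a)) ^ 2 - 2 * b * (max 0 (b / a)) ≤ a * y ^ 2 - 2 * b * y := by
  rcases le_or_gt b 0 with hb | hb
  · rw [max_eq_left (div_nonpos_of_nonpos_of_nonneg hb ha.le)]
    nlinarith
  · rw [max_eq_right (le_of_lt (div_pos hb ha))]
    have hx2 : a * (b / a) ^ 2 = b * (b / a) := by
      rw [sq, ← mul_assoc, mul_div_cancel₀ b (ne_of_gt ha)]
    have key : a * (y - b / a) ^ 2 = a * y ^ 2 - 2 * b * y + b * (b / a) := by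
      field_simp
      ring
    linarith [mul_nonneg ha.le (sq_nonneg (y - b / a)), key, hx2]

/-- The HALS update of the `p`-th column of `W` keeps `W` nonnegative and does not
increase the Frobenius norm of the residual. -/
theorem hals_column_update_nonincreasing {m n r : ℕ}
    (M : Matrix (Fin m) (Fin n) ℝ)
    (W : Matrix (Fin m) (Fin r) ℝ) (hW : ∀ i l, 0 ≤ W i l)
    (H : Matrix (Fin r) (Fin n) ℝ)
    (p : Fin r) (hHp : H p ≠ 0)
    (wStar : Fin m → ℝ)
    (hwStar : ∀ i, wStar i = max 0
      (((M * Hᵀ) i p - ∑ l ∈ univ \ {p}, W i l * (H * Hᵀ) l p) / (H * Hᵀ) p p))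
    (W' : Matrix (Fin m) (Fin r) ℝ) (hW' : W' = W.updateCol p wStar) :
    (∀ i l, 0 ≤ W' i l) ∧
    frobNorm (M - W' * H) ≤ frobNorm (M - W * H) := by
  have hwnn : ∀ i, 0 ≤ wStar i := fun i => by rw [hwStar i]; exact le_max_left _ _
  constructor
  · intro i l
    rw [hW', Matrix.updateCol_apply]
    split
    · exact hwnn i
    · exact hW i l
  · apply Real.sqrt_le_sqrt
    apply Finset.sum_le_sum
    intro i _
    -- per-row inequality
    set a : ℝ := ∑ j, (H p j) ^ 2 with ha_def
    set b : ℝ := ∑ j, (M i j - ∑ l ∈ univ \ {p}, W i l * H l j) * H p j with hb_def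
    have hpmem : p ∈ (univ : Finset (Fin r)) := mem_univ p
    have ha_pos : 0 < a := by
      obtain ⟨j, hj⟩ := Function.ne_iff.mp hHp
      exact Finset.sum_pos' (fun j _ => sq_nonneg _) ⟨j, mem_univ j, sq_pos_of_ne_zero hj⟩
    have haHH : (H * Hᵀ) p p = a := by
      simp [Matrix.mul_apply, ha_def, sq]
    have hbHH : (M * Hᵀ) i p - ∑ l ∈ univ \ {p}, W i l * (H * Hᵀ) l p = b := by
      simp only [hb_def, Matrix.mul_apply, Matrix.transpose_apply, sub_mul,
        Finset.sum_sub_distrib, Finset.sum_mul, Finset.mul_sum]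
      congr 1
      rw [Finset.sum_comm]
      apply Finset.sum_congr rfl
      intro l _
      apply Finset.sum_congr rfl
      intro j _
      ring
    have hws : wStar i = max 0 (b / a) := by rw [hwStar i, haHH, hbHH]
    -- expansion of the row residual for general coefficient x on column p
    have expand : ∀ x : ℝ,
        ∑ j, ((M i j - ∑ l ∈ univ \ {p}, W i l * H l j) - x * H p j) ^ 2
          = (∑ j, (M i j - ∑ l ∈ univ \ {p}, W i l * H l j) ^ 2)
            - 2 * b * x + a * x ^ 2 := by
      intro x
      simp only [hb_def, ha_def, Finset.mul_sum, Finset.sum_mul]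
      rw [← Finset.sum_sub_distrib, ← Finset.sum_add_distrib]
      apply Finset.sum_congr rfl
      intro j _
      ring
    have hsplit : ∀ (V : Matrix (Fin m) (Fin r) ℝ) (j : Fin n),
        ∑ l, V i l * H l j = (∑ l ∈ univ \ {p}, V i l * H l j) + V i p * H p j := by
      intro V j
      rw [Finset.sum_eq_sum_sdiff_singleton_add hpmem (fun l => V i l * H l j)]
    have hW'row : ∀ j, (M - W' * H) i j
        = (M i j - ∑ l ∈ univ \ {p}, W i l * H l j) - wStar i * H p j := by
      intro j
      simp only [Matrix.sub_apply, Matrix.mul_apply]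
      rw [hsplit W']
      have hWp : W' i p = wStar i := by rw [hW']; simp
      have : ∀ l ∈ univ \ {p}, W' i l * H l j = W i l * H l j := by
        intro l hl
        rw [hW', Matrix.updateCol_apply, if_neg (by simpa using (Finset.mem_sdiff.mp hl).2)]
      rw [Finset.sum_congr rfl this, hWp]
      ring
    have hWrow : ∀ j, (M - W * H) i j
        = (M i j - ∑ l ∈ univ \ {p}, W i l * H l j) - W i p * H p j := by
      intro j
      simp only [Matrix.sub_apply, Matrix.mul_apply]
      rw [hsplit W]
      ring
    calc ∑ j, ((M - W' * H) i j) ^ 2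
        = (∑ j, (M i j - ∑ l ∈ univ \ {p}, W i l * H l j) ^ 2)
            - 2 * b * wStar i + a * (wStar i) ^ 2 := by
          rw [← expand (wStar i)]
          exact Finset.sum_congr rfl fun j _ => by rw [hW'row j]
      _ ≤ (∑ j, (M i j - ∑ l ∈ univ \ {p}, W i l * H l j) ^ 2)
            - 2 * b * (W i p) + a * (W i p) ^ 2 := by
          have := quad_min a b (W i p) ha_pos (hW i p)
          rw [hws]
          linarith
      _ = ∑ j, ((M - W * H) i j) ^ 2 := by
          rw [← expand (W i p)]
          exact (Finset.sum_congr rfl fun j _ => by rw [hWrow j]).symm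
end

section
/- Let M ∈ ℝ^{m×n}, let W^{(0)} ∈ ℝ^{m×r} have nonnegative entries, and let H ∈ ℝ^{r×n} have all rows nonzero. Define the full HALS sweep W^{(r)} by successively, for p = 1, 2, …, r, replacing the p-th column of the current matrix W^{(p−1)} by the vector with entries max(0, ((M Hᵀ)_{ip} − Σ_{l<p} W^{(p)}_{il} (H Hᵀ)_{lp} − Σ_{l>p} W^{(p−1)}_{il} (H Hᵀ)_{lp}) / (H Hᵀ)_{pp}). Then each intermediate matrix is nonnegative and the sequence of errors p ↦ ‖M − W^{(p)} H‖_F is nonincreasing; in particular ‖M − W^{(r)} H‖_F ≤ ‖M − W^{(0)} H‖_F. -/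
open Matrix Finset

lemma hals_key (a b s : ℝ) (ha : 0 < a) (hs : 0 ≤ s) :
    a * (max 0 (b/a))^2 - 2*b*(max 0 (b/a)) ≤ a*s^2 - 2*b*s := by
  rcases le_or_gt b 0 with hb | hb
  · have h1 : b / a ≤ 0 := div_nonpos_of_nonpos_of_nonneg hb ha.le
    rw [max_eq_left h1]
    nlinarith
  · rw [max_eq_right (by positivity)]
    have h1 : a * (b/a) = b := by field_simp
    nlinarith [sq_nonneg (a*s - b), mul_pos ha ha]

lemma quad_expand {n : ℕ} (R h : Fin n → ℝ) (t : ℝ) :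
    ∑ j, (R j - t * h j)^2
      = (∑ j, (R j)^2) - 2*t*(∑ j, R j * h j) + t^2 * (∑ j, (h j)^2) := by
  rw [Finset.mul_sum, Finset.mul_sum, ← Finset.sum_sub_distrib, ← Finset.sum_add_distrib]
  exact Finset.sum_congr rfl fun j _ => by ring

lemma hals_step_sq_le {m n r : ℕ} (M : Matrix (Fin m) (Fin n) ℝ)
    (H : Matrix (Fin r) (Fin n) ℝ) (p : Fin r)
    (W W' : Matrix (Fin m) (Fin r) ℝ)
    (ha : 0 < ∑ j, H p j ^ 2)
    (hW : ∀ i, 0 ≤ W i p)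
    (hcols : ∀ i l, l ≠ p → W' i l = W i l)
    (hcolp : ∀ i, W' i p = max 0
      ((∑ j, (M i j - ∑ l ∈ univ.erase p, W i l * H l j) * H p j) / (∑ j, H p j ^ 2))) :
    ∑ i, ∑ j, ((M - W' * H) i j)^2 ≤ ∑ i, ∑ j, ((M - W * H) i j)^2 := by
  apply Finset.sum_le_sum
  intro i _
  set R : Fin n → ℝ := fun j => M i j - ∑ l ∈ univ.erase p, W i l * H l j with hR
  have expand : ∀ (V : Matrix (Fin m) (Fin r) ℝ), (∀ l, l ≠ p → V i l = W i l) →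
      ∀ j, (M - V * H) i j = R j - V i p * H p j := by
    intro V hV j
    simp only [Matrix.sub_apply, Matrix.mul_apply]
    rw [← Finset.sum_erase_add _ _ (mem_univ p)]
    rw [Finset.sum_congr rfl (fun l hl => by rw [hV l (Finset.ne_of_mem_erase hl)] :
      ∀ l ∈ univ.erase p, V i l * H l j = W i l * H l j)]
    simp only [hR]; ring
  have e1 : ∀ j, (M - W' * H) i j = R j - W' i p * H p j := expand W' (fun l hl => hcols i l hl)
  have e2 : ∀ j, (M - W * H) i j = R j - W i p * H p j := expand W (fun _ _ => rfl)
  simp only [e1, e2]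
  rw [quad_expand, quad_expand]
  have key := hals_key (∑ j, H p j ^ 2) (∑ j, R j * H p j) (W i p) ha (hW i)
  rw [← hcolp i] at key
  linarith

/-- A full HALS sweep over the columns of `W` (successively replacing each column by
its closed-form optimal nonnegative update) keeps all intermediate matrices
nonnegative and makes the residual error nonincreasing; in particular the error after
the full sweep is at most the initial error. -/
theorem hals_full_sweep_nonincreasing {m n r : ℕ}
    (M : Matrix (Fin m) (Fin n) ℝ)
    (H : Matrix (Fin r) (Fin n) ℝ) (hH : ∀ p : Fin r, H p ≠ 0)
    (Wseq : ℕ → Matrix (Fin m) (Fin r) ℝ)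
    (h0 : ∀ i l, 0 ≤ Wseq 0 i l)
    (hstep : ∀ p : Fin r, Wseq (p.val + 1) = (Wseq p.val).updateCol p (fun i =>
      max 0 (((M * Hᵀ) i p
        - ∑ l ∈ univ.filter (fun l => l < p), Wseq (p.val + 1) i l * (H * Hᵀ) l p
        - ∑ l ∈ univ.filter (fun l => p < l), Wseq p.val i l * (H * Hᵀ) l p)
        / (H * Hᵀ) p p))) :
    (∀ k ≤ r, ∀ i l, 0 ≤ Wseq k i l) ∧
    (∀ k < r, frobNorm (M - Wseq (k + 1) * H) ≤ frobNorm (M - Wseq k * H)) ∧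
    frobNorm (M - Wseq r * H) ≤ frobNorm (M - Wseq 0 * H) := by
  -- nonnegativity
  have nonneg : ∀ k ≤ r, ∀ i l, 0 ≤ Wseq k i l := by
    intro k
    induction k with
    | zero => intro _ ; exact h0
    | succ k ih =>
      intro hk i l
      have hkr : k < r := Nat.lt_of_succ_le hk
      have h := hstep ⟨k, hkr⟩
      rw [h, Matrix.updateCol_apply]
      by_cases hl : l = ⟨k, hkr⟩
      · rw [if_pos hl]; exact le_max_left 0 _
      · rw [if_neg hl]; exact ih hkr.le i l
  have mono : ∀ k < r, frobNorm (M - Wseq (k + 1) * H) ≤ frobNorm (M - Wseq k * H) := by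
    intro k hk
    set p : Fin r := ⟨k, hk⟩ with hp
    -- positivity of the diagonal
    have hex : ∃ j, H p j ≠ 0 := Function.ne_iff.mp (hH p)
    obtain ⟨j0, hj0⟩ := hex
    have ha : 0 < ∑ j, H p j ^ 2 :=
      Finset.sum_pos' (fun j _ => sq_nonneg _) ⟨j0, mem_univ _, by positivity⟩
    have hdiag : (H * Hᵀ) p p = ∑ j, H p j ^ 2 := by
      simp [Matrix.mul_apply, Matrix.transpose_apply, sq]
    have hcols : ∀ i l, l ≠ p → Wseq (k + 1) i l = Wseq k i l := by
      intro i l hl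
      have h := hstep p
      simp only [hp] at h ⊢
      rw [h, Matrix.updateCol_apply, if_neg hl]
    -- splitting the erase-sum
    have hsplit : ∀ f : Fin r → ℝ,
        ∑ l ∈ univ.filter (fun l => l < p), f l + ∑ l ∈ univ.filter (fun l => p < l), f l
          = ∑ l ∈ univ.erase p, f l := by
      intro f
      have hset : univ.erase p = univ.filter (fun l => l < p) ∪ univ.filter (fun l => p < l) := by
        ext l
        simp only [Finset.mem_erase, Finset.mem_union, Finset.mem_filter, Finset.mem_univ,
          true_and, and_true]
        constructor
        · intro h; exact lt_or_gt_of_ne h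
        · intro h; rcases h with h | h
          · exact ne_of_lt h
          · exact ne_of_gt h
      rw [hset, Finset.sum_union]
      simp only [Finset.disjoint_left, Finset.mem_filter, Finset.mem_univ, true_and]
      intro l h1 h2
      exact absurd h2 (lt_asymm h1)
    have hcolp : ∀ i, Wseq (k + 1) i p = max 0
        ((∑ j, (M i j - ∑ l ∈ univ.erase p, Wseq k i l * H l j) * H p j)
          / (∑ j, H p j ^ 2)) := by
      intro i
      have h := hstep p
      simp only [hp] at h
      rw [h, Matrix.updateCol_apply, if_pos rfl]
      congr 1
      rw [← hdiag]
      congr 1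
      have hlow : ∑ l ∈ univ.filter (fun l => l < p), Wseq (k + 1) i l * (H * Hᵀ) l p
          = ∑ l ∈ univ.filter (fun l => l < p), Wseq k i l * (H * Hᵀ) l p := by
        apply Finset.sum_congr rfl
        intro l hl
        rw [hcols i l (ne_of_lt (Finset.mem_filter.mp hl).2)]
      rw [hlow]
      have hnum : ∑ j, (M i j - ∑ l ∈ univ.erase p, Wseq k i l * H l j) * H p j
          = (M * Hᵀ) i p - ∑ l ∈ univ.erase p, Wseq k i l * (H * Hᵀ) l p := by
        simp_rw [sub_mul, Finset.sum_sub_distrib, Finset.sum_mul, Matrix.mul_apply,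
          Matrix.transpose_apply]
        congr 1
        rw [Finset.sum_comm]
        exact Finset.sum_congr rfl fun l _ => by
          rw [Finset.mul_sum]
          exact Finset.sum_congr rfl fun j _ => by ring
      rw [hnum, ← hsplit (fun l => Wseq k i l * (H * Hᵀ) l p)]
      ring
    have main := hals_step_sq_le M H p (Wseq k) (Wseq (k + 1)) ha
      (fun i => nonneg k hk.le i p) hcols hcolp
    exact Real.sqrt_le_sqrt main
  have chain : ∀ k ≤ r, frobNorm (M - Wseq k * H) ≤ frobNorm (M - Wseq 0 * H) := by
    intro k
    induction k with
    | zero => intro _; exact le_refl _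
    | succ k ih =>
      intro hk
      exact le_trans (mono k (Nat.lt_of_succ_le hk)) (ih (Nat.le_of_succ_le hk))
  exact ⟨nonneg, mono, chain r le_rfl⟩
end

section
/- Let M ∈ ℝ^{m×n}, W ∈ ℝ^{m×r}, H ∈ ℝ^{r×n}, and fix p with the p-th row H_{p:} of H nonzero. Then the function g : ℝ^m → ℝ defined by g(w) = ‖M − W[p←w] H‖_F², where W[p←w] is W with its p-th column replaced by w, is strictly convex on ℝ^m. -/
open Matrix

lemma hals_key_le (a b u v : ℝ) (ha : 0 < a) (hb : 0 < b) (hab : a + b = 1) :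
    (a*u + b*v)^2 ≤ a*u^2 + b*v^2 := by
  nlinarith [sq_nonneg (u - v), mul_pos ha hb]

lemma hals_key_lt (a b u v : ℝ) (ha : 0 < a) (hb : 0 < b) (hab : a + b = 1)
    (huv : u ≠ v) : (a*u + b*v)^2 < a*u^2 + b*v^2 := by
  have h1 : u - v ≠ 0 := sub_ne_zero.mpr huv
  have h2 : 0 < (u - v)^2 := by positivity
  nlinarith [mul_pos ha hb]

/-- If the `p`-th row of `H` is nonzero, the HALS column subproblem
`w ↦ ‖M − W[p←w] H‖_F²` is strictly convex on `ℝ^m`. -/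
theorem hals_column_subproblem_strictly_convex {m n r : ℕ}
    (M : Matrix (Fin m) (Fin n) ℝ)
    (W : Matrix (Fin m) (Fin r) ℝ)
    (H : Matrix (Fin r) (Fin n) ℝ)
    (p : Fin r) (hHp : H p ≠ 0) :
    StrictConvexOn ℝ Set.univ
      (fun w : Fin m → ℝ => frobNorm (M - (W.updateCol p w) * H) ^ 2) := by
  set C : Matrix (Fin m) (Fin n) ℝ :=
    fun i j => M i j - ∑ k ∈ Finset.univ.erase p, W i k * H k j with hC
  have hsum : ∀ w : Fin m → ℝ,
      frobNorm (M - (W.updateCol p w) * H) ^ 2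
        = ∑ i, ∑ j, (C i j - w i * H p j)^2 := by
    intro w
    rw [frobNorm, Real.sq_sqrt (by positivity)]
    refine Finset.sum_congr rfl fun i _ => Finset.sum_congr rfl fun j _ => ?_
    have hentry : (M - (W.updateCol p w) * H) i j = C i j - w i * H p j := by
      simp only [Matrix.sub_apply, Matrix.mul_apply, Matrix.updateCol_apply, hC]
      rw [← Finset.add_sum_erase _ _ (Finset.mem_univ p)]
      rw [Finset.sum_congr rfl (fun k hk => by
        rw [if_neg (Finset.mem_erase.mp hk).1] :
        ∀ k ∈ Finset.univ.erase p, (if k = p then w i else W i k) * H k j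
          = W i k * H k j)]
      simp; ring
    rw [hentry]
  have hfun : (fun w : Fin m → ℝ => frobNorm (M - (W.updateCol p w) * H) ^ 2)
      = fun w => ∑ i, ∑ j, (C i j - w i * H p j)^2 := funext hsum
  rw [hfun]
  refine ⟨convex_univ, fun x _ y _ hxy a b ha hb hab => ?_⟩
  obtain ⟨i0, hi0⟩ := Function.ne_iff.mp hxy
  obtain ⟨j0, hj0⟩ := Function.ne_iff.mp hHp
  simp only [smul_eq_mul, Pi.add_apply, Pi.smul_apply]
  rw [Finset.mul_sum, Finset.mul_sum, ← Finset.sum_add_distrib]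
  have hconv : ∀ i : Fin m, ∀ j : Fin n,
      (C i j - (a * x i + b * y i) * H p j)^2
        ≤ a * (C i j - x i * H p j)^2 + b * (C i j - y i * H p j)^2 := by
    intro i j
    have heq : C i j - (a * x i + b * y i) * H p j
        = a * (C i j - x i * H p j) + b * (C i j - y i * H p j) := by
      linear_combination (-(C i j)) * hab
    rw [heq]
    exact hals_key_le a b _ _ ha hb hab
  refine Finset.sum_lt_sum (fun i _ => ?_) ⟨i0, Finset.mem_univ i0, ?_⟩
  · rw [Finset.mul_sum, Finset.mul_sum, ← Finset.sum_add_distrib]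
    exact Finset.sum_le_sum fun j _ => hconv i j
  · rw [Finset.mul_sum, Finset.mul_sum, ← Finset.sum_add_distrib]
    refine Finset.sum_lt_sum (fun j _ => hconv i0 j) ⟨j0, Finset.mem_univ j0, ?_⟩
    have heq : C i0 j0 - (a * x i0 + b * y i0) * H p j0
        = a * (C i0 j0 - x i0 * H p j0) + b * (C i0 j0 - y i0 * H p j0) := by
      linear_combination (-(C i0 j0)) * hab
    rw [heq]
    refine hals_key_lt a b _ _ ha hb hab ?_
    intro hcontra
    apply hi0
    have : x i0 * H p j0 = y i0 * H p j0 := by linarith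
    exact mul_right_cancel₀ hj0 this
end
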